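/- Let A, B, C, D, τ, ω be real with ω > 0, B²ω² + D² ≠ 0, and suppose λ = iω is a simple root of Δ(λ) = λ² + (A+Be^{-λτ})λ + (C+De^{-λτ}). If additionally ω satisfies ω⁴ = (B²-A²+2C)ω² + (D²-C²) and A²ω² + (C-ω²)² = B²ω² + D², then Re[(dλ/dτ)⁻¹] = (D² - C² + ω⁴)/(ω²(B²ω² + D²)). -/

import Mathlib

theorem stmt9 (A B C D τ ω : ℝ) (hω : 0 < ω)
    (hBD : B ^ 2 * ω ^ 2 + D ^ 2 ≠ 0)
    (hroot : (Complex.I * ω) ^ 2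
        + ((A : ℂ) + (B : ℂ) * Complex.exp (-(Complex.I * ω) * τ)) * (Complex.I * ω)
        + ((C : ℂ) + (D : ℂ) * Complex.exp (-(Complex.I * ω) * τ)) = 0)
    (hsimple : 2 * (Complex.I * ω) + ((A : ℂ) + (B : ℂ) * Complex.exp (-(Complex.I * ω) * τ))
        - (τ : ℂ) * Complex.exp (-(Complex.I * ω) * τ)
            * ((B : ℂ) * (Complex.I * ω) + (D : ℂ)) ≠ 0)
    (hfreq : ω ^ 4 = (B ^ 2 - A ^ 2 + 2 * C) * ω ^ 2 + (D ^ 2 - C ^ 2))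
    (hmod : A ^ 2 * ω ^ 2 + (C - ω ^ 2) ^ 2 = B ^ 2 * ω ^ 2 + D ^ 2) :
    ((((A : ℂ) + 2 * (Complex.I * ω)) * Complex.exp ((Complex.I * ω) * τ))
          / ((Complex.I * ω) * ((B : ℂ) * (Complex.I * ω) + (D : ℂ)))
        - ((B : ℂ) * (Complex.I * ω) * τ - (B : ℂ) + (D : ℂ) * τ)
          / ((Complex.I * ω) * ((B : ℂ) * (Complex.I * ω) + (D : ℂ)))).re
      = (D ^ 2 - C ^ 2 + ω ^ 4) / (ω ^ 2 * (B ^ 2 * ω ^ 2 + D ^ 2)) := by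
  set u : ℝ := Real.cos (ω * τ) with hu
  set v : ℝ := Real.sin (ω * τ) with hv
  have he1 : Complex.exp (-(Complex.I * ω) * τ) = (u : ℂ) - (v : ℂ) * Complex.I := by
    have : (-(Complex.I * (ω:ℂ)) * (τ:ℂ)) = ((-(ω * τ) : ℝ) : ℂ) * Complex.I := by
      push_cast; ring
    rw [this, Complex.exp_mul_I, Complex.ofReal_neg, Complex.cos_neg, Complex.sin_neg,
      ← Complex.ofReal_cos, ← Complex.ofReal_sin]
    ring
  have he2 : Complex.exp ((Complex.I * ω) * τ) = (u : ℂ) + (v : ℂ) * Complex.I := by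
    have : ((Complex.I * (ω:ℂ)) * (τ:ℂ)) = ((ω * τ : ℝ) : ℂ) * Complex.I := by
      push_cast; ring
    rw [this, Complex.exp_mul_I, ← Complex.ofReal_cos, ← Complex.ofReal_sin]
  rw [he1] at hroot
  have hre : -ω ^ 2 + B * v * ω + C + D * u = 0 := by
    have := congrArg Complex.re hroot
    have h := congrArg Complex.re hroot
    simp [Complex.ext_iff, Complex.add_re, Complex.mul_re, Complex.mul_im, pow_two] at h
    linarith [h]
  have him : ω * (A + B * u) - D * v = 0 := by
    have h := congrArg Complex.im hroot
    simp [Complex.ext_iff, Complex.add_im, Complex.mul_re, Complex.mul_im, pow_two] at h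
    linarith [h]
  have hωne : ω ≠ 0 := ne_of_gt hω
  have hden : ω ^ 2 * (B ^ 2 * ω ^ 2 + D ^ 2) ≠ 0 :=
    mul_ne_zero (pow_ne_zero 2 hωne) hBD
  have hns : Complex.normSq (Complex.I * (ω:ℂ) * ((B:ℂ) * (Complex.I * (ω:ℂ)) + (D:ℂ)))
      = ω ^ 2 * (B ^ 2 * ω ^ 2 + D ^ 2) := by
    simp [Complex.normSq_apply, Complex.mul_re, Complex.mul_im]
    ring
  rw [he2, div_sub_div_same, Complex.div_re, hns, ← add_div,
    div_eq_div_iff hden hden]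
  simp only [Complex.add_re, Complex.add_im, Complex.sub_re, Complex.sub_im,
    Complex.mul_re, Complex.mul_im, Complex.I_re, Complex.I_im,
    Complex.ofReal_re, Complex.ofReal_im, Complex.re_ofNat, Complex.im_ofNat]
  linear_combination (ω ^ 2 * (B ^ 2 * ω ^ 2 + D ^ 2)) *
    ((-A * ω) * him + (2 * ω ^ 2) * hre + hfreq)
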